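/- Any atomic SL(2,ℤ)-invariant ergodic Borel probability measure on the torus (ℝ/ℤ)² is the uniform measure on the finite set of pairs (x, y) ∈ (ℤ[1/r]/ℤ)² such that x and y generate ℤ[1/r]/ℤ, for some r ≥ 1; in particular every point in its support has both coordinates rational. -/

import Mathlib

open MeasureTheory

/-- The 2-torus `(ℝ/ℤ)²`. -/
abbrev Torus2 := AddCircle (1 : ℝ) × AddCircle (1 : ℝ)

/-- The linear action of `SL(2, ℤ)` on the torus `(ℝ/ℤ)²`. -/
noncomputable def sl2Act (A : Matrix.SpecialLinearGroup (Fin 2) ℤ) (v : Torus2) :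
    Torus2 :=
  (A.1 0 0 • v.1 + A.1 0 1 • v.2, A.1 1 0 • v.1 + A.1 1 1 • v.2)

/-- The subgroup `ℤ[1/r]/ℤ = {z ∈ ℝ/ℤ : r • z = 0}` of `ℝ/ℤ`. -/
noncomputable def torsSub (r : ℕ) : AddSubgroup (AddCircle (1 : ℝ)) where
  carrier := {z | (r : ℤ) • z = 0}
  zero_mem' := smul_zero _
  add_mem' := by
    intro a b ha hb
    simp only [Set.mem_setOf_eq, smul_add] at *
    rw [ha, hb, add_zero]
  neg_mem' := by
    intro a ha
    simp only [Set.mem_setOf_eq, smul_neg] at *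
    rw [ha, neg_zero]

/-- The set of pairs `(x, y) ∈ (ℤ[1/r]/ℤ)²` such that `x` and `y` generate
`ℤ[1/r]/ℤ`. -/
noncomputable def genSet (r : ℕ) : Set Torus2 :=
  {v | AddSubgroup.closure {v.1, v.2} = torsSub r}



noncomputable def tgen (r : ℕ) : AddCircle (1 : ℝ) := (((r:ℝ)⁻¹ : ℝ) : AddCircle (1:ℝ))

lemma addOrderOf_tgen {r : ℕ} (hr : 1 ≤ r) : addOrderOf (tgen r) = r := by
  have h := AddCircle.addOrderOf_div_of_gcd_eq_one (p := (1:ℝ)) (m := 1) (n := r) hr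
    (Nat.gcd_one_left r)
  simpa [tgen, one_div, inv_mul_eq_div] using h

lemma mem_torsSub {r : ℕ} {z : AddCircle (1:ℝ)} : z ∈ torsSub r ↔ (r : ℤ) • z = 0 := Iff.rfl

lemma torsSub_eq_zmultiples {r : ℕ} (hr : 1 ≤ r) :
    torsSub r = AddSubgroup.zmultiples (tgen r) := by
  have hord := addOrderOf_tgen hr
  apply le_antisymm
  · intro z hz
    rw [mem_torsSub] at hz
    have hz' : r • z = 0 := by rwa [natCast_zsmul] at hz
    rcases eq_or_ne z 0 with rfl | hz0
    · exact zero_mem _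
    have hfin : IsOfFinAddOrder z := isOfFinAddOrder_iff_nsmul_eq_zero.2 ⟨r, hr, hz'⟩
    set k := addOrderOf z with hk
    have hkpos : 0 < k := hfin.addOrderOf_pos
    have hkdvd : k ∣ r := addOrderOf_dvd_of_nsmul_eq_zero hz'
    obtain ⟨m, hmk, hgcd, hzm⟩ := (AddCircle.addOrderOf_eq_pos_iff hkpos).1 hk.symm
    refine AddSubgroup.mem_zmultiples_iff.2 ⟨(m * (r / k) : ℕ), ?_⟩
    rw [← hzm]
    have : ((m * (r / k) : ℕ) : ℤ) • tgen r = ((m * (r/k) : ℕ)) • tgen r := by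
      rw [natCast_zsmul]
    rw [this, tgen, ← AddCircle.coe_nsmul]
    congr 1
    have hk0 : (k:ℝ) ≠ 0 := Nat.cast_ne_zero.2 hkpos.ne'
    have hr0 : (r:ℝ) ≠ 0 := Nat.cast_ne_zero.2 (by omega)
    have hcast : ((r / k : ℕ) : ℝ) = (r : ℝ) / k := by
      rw [Nat.cast_div hkdvd hk0]
    rw [nsmul_eq_mul, Nat.cast_mul, hcast]
    field_simp
  · rw [AddSubgroup.zmultiples_le, mem_torsSub, natCast_zsmul]
    have h2 := addOrderOf_nsmul_eq_zero (tgen r)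
    rwa [hord] at h2

lemma zsmul_tgen_eq_zero_iff {r : ℕ} (hr : 1 ≤ r) (n : ℤ) :
    n • tgen r = 0 ↔ (r:ℤ) ∣ n := by
  rw [← addOrderOf_dvd_iff_zsmul_eq_zero, addOrderOf_tgen hr]

lemma tgen_mem_torsSub {r : ℕ} (hr : 1 ≤ r) : tgen r ∈ torsSub r := by
  rw [mem_torsSub, zsmul_tgen_eq_zero_iff hr]

lemma zsmul_tgen_mem_torsSub {r : ℕ} (hr : 1 ≤ r) (n : ℤ) : n • tgen r ∈ torsSub r :=
  AddSubgroup.zsmul_mem _ (tgen_mem_torsSub hr) n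

lemma zsmul_tgen_eq_iff {r : ℕ} (hr : 1 ≤ r) (n m : ℤ) :
    n • tgen r = m • tgen r ↔ (r:ℤ) ∣ n - m := by
  rw [← zsmul_tgen_eq_zero_iff hr, sub_smul, sub_eq_zero]

lemma closure_pair_tgen_iff {r : ℕ} (hr : 1 ≤ r) (b d : ℤ) :
    AddSubgroup.closure {b • tgen r, d • tgen r} = torsSub r ↔
      ∃ x y : ℤ, (r:ℤ) ∣ x * b + y * d - 1 := by
  constructor
  · intro h
    have hu : tgen r ∈ AddSubgroup.closure {b • tgen r, d • tgen r} := by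
      rw [h]; exact tgen_mem_torsSub hr
    obtain ⟨x, y, hxy⟩ := AddSubgroup.mem_closure_pair.1 hu
    refine ⟨x, y, ?_⟩
    rw [← zsmul_tgen_eq_zero_iff hr, sub_smul, add_smul, mul_smul, mul_smul, one_zsmul, hxy,
      sub_self]
  · rintro ⟨x, y, hxy⟩
    apply le_antisymm
    · rw [AddSubgroup.closure_le]
      rintro z (rfl | rfl)
      · exact zsmul_tgen_mem_torsSub hr b
      · exact zsmul_tgen_mem_torsSub hr d
    · rw [torsSub_eq_zmultiples hr, AddSubgroup.zmultiples_le]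
      refine AddSubgroup.mem_closure_pair.2 ⟨x, y, ?_⟩
      rw [smul_smul, smul_smul, ← add_smul]
      nth_rewrite 2 [← one_zsmul (tgen r)]
      rw [zsmul_tgen_eq_iff hr]
      exact hxy

lemma coprime_lift (r : ℕ) (b d x y : ℤ) (h : (r:ℤ) ∣ x * b + y * d - 1) :
    ∃ b' d' : ℤ, (r:ℤ) ∣ b' - b ∧ (r:ℤ) ∣ d' - d ∧ IsCoprime b' d' := by
  rcases eq_or_ne b 0 with rfl | hb0
  · -- b = 0 : take b' = r, d' = d
    obtain ⟨t, ht⟩ := h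
    refine ⟨r, d, by simp, by simp, ⟨-t, y, ?_⟩⟩
    have : y * d - 1 = (r:ℤ) * t := by linarith
    linarith
  · set k : ℤ := ∏ p ∈ b.natAbs.primeFactors.filter (fun p : ℕ => ¬ (p:ℤ) ∣ d), (p:ℤ) with hk
    refine ⟨b, d + r * k, by simp, by simp, ?_⟩
    rw [Int.isCoprime_iff_gcd_eq_one]
    by_contra hg
    obtain ⟨p, hp, hpdvd⟩ := Nat.exists_prime_and_dvd hg
    have hpb : (p:ℤ) ∣ b := by
      have := hpdvd.trans (Nat.gcd_dvd_left _ _)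
      exact Int.dvd_natAbs.1 (Int.natCast_dvd_natCast.2 this)
    have hpd' : (p:ℤ) ∣ d + r * k := by
      have := hpdvd.trans (Nat.gcd_dvd_right _ _)
      exact Int.dvd_natAbs.1 (Int.natCast_dvd_natCast.2 this)
    have hpprime : Prime (p:ℤ) := Nat.prime_iff_prime_int.mp hp
    by_cases hpd : (p:ℤ) ∣ d
    · have hprk : (p:ℤ) ∣ (r:ℤ) * k := by
        have : (r:ℤ) * k = d + r * k - d := by ring
        rw [this]; exact dvd_sub hpd' hpd
      rcases hpprime.dvd_mul.1 hprk with hpr | hpk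
      · -- p ∣ r, p ∣ b, p ∣ d ⇒ p ∣ 1
        have h1 : (p:ℤ) ∣ 1 := by
          have : (1:ℤ) = x * b + y * d - (x * b + y * d - 1) := by ring
          rw [this]
          exact dvd_sub (dvd_add (Dvd.dvd.mul_left hpb x) (Dvd.dvd.mul_left hpd y))
            (hpr.trans h)
        exact hpprime.not_unit (isUnit_of_dvd_one h1)
      · -- p ∣ k ⇒ p equals one of the primes not dividing d, contradiction
        rw [hk] at hpk
        rw [Prime.dvd_finset_prod_iff hpprime] at hpk
        obtain ⟨q, hq, hpq⟩ := hpk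
        rw [Finset.mem_filter] at hq
        have hqprime : Nat.Prime q := Nat.prime_of_mem_primeFactors hq.1
        have : p = q := by
          have := Int.natCast_dvd_natCast.1 hpq
          exact (Nat.prime_dvd_prime_iff_eq hp hqprime).1 this
        exact hq.2 (this ▸ hpd)
    · -- p ∤ d ⇒ p ∈ filter set ⇒ p ∣ k ⇒ p ∣ d, contradiction
      have hpmem : p ∈ b.natAbs.primeFactors.filter (fun p : ℕ => ¬ (p:ℤ) ∣ d) := by
        rw [Finset.mem_filter, Nat.mem_primeFactors]
        refine ⟨⟨hp, ?_, Int.natAbs_ne_zero.2 hb0⟩, hpd⟩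
        exact Int.natCast_dvd_natCast.1 (Int.dvd_natAbs.2 hpb)
      have hpk : (p:ℤ) ∣ k := by
        rw [hk]
        exact Finset.dvd_prod_of_mem _ hpmem
      have : (p:ℤ) ∣ d := by
        have hd : d = d + r * k - r * k := by ring
        rw [hd]
        exact dvd_sub hpd' (Dvd.dvd.mul_left hpk r)
      exact hpd this

lemma sl2Act_one (v : Torus2) : sl2Act 1 v = v := by
  simp [sl2Act]

lemma sl2Act_mul (A B : Matrix.SpecialLinearGroup (Fin 2) ℤ) (v : Torus2) :
    sl2Act (A * B) v = sl2Act A (sl2Act B v) := by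
  simp only [sl2Act, Matrix.SpecialLinearGroup.coe_mul, Matrix.mul_apply, Fin.sum_univ_two,
    add_smul, mul_smul, smul_add]
  exact Prod.ext (by abel) (by abel)

lemma sl2Act_inv_self (A : Matrix.SpecialLinearGroup (Fin 2) ℤ) (v : Torus2) :
    sl2Act A⁻¹ (sl2Act A v) = v := by
  rw [← sl2Act_mul, inv_mul_cancel, sl2Act_one]

lemma sl2Act_injective (A : Matrix.SpecialLinearGroup (Fin 2) ℤ) :
    Function.Injective (sl2Act A) := by
  intro a b h
  have := congrArg (sl2Act A⁻¹) h
  rwa [sl2Act_inv_self, sl2Act_inv_self] at this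

lemma sl2Act_preimage_singleton (A : Matrix.SpecialLinearGroup (Fin 2) ℤ) (v : Torus2) :
    sl2Act A ⁻¹' {sl2Act A v} = {v} := by
  ext z
  simp only [Set.mem_preimage, Set.mem_singleton_iff]
  exact ⟨fun h => sl2Act_injective A h, fun h => by rw [h]⟩

lemma exists_SL2_column {r : ℕ} (b d x y : ℤ) (h : (r:ℤ) ∣ x * b + y * d - 1) :
    ∃ A : Matrix.SpecialLinearGroup (Fin 2) ℤ,
      (r:ℤ) ∣ A.1 0 0 - b ∧ (r:ℤ) ∣ A.1 1 0 - d := by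
  obtain ⟨b', d', hb, hd, hco⟩ := coprime_lift r b d x y h
  obtain ⟨u, v, huv⟩ := hco
  refine ⟨⟨!![b', -v; d', u], ?_⟩, ?_, ?_⟩
  · rw [Matrix.det_fin_two_of]; linarith
  · simpa using hb
  · simpa using hd

-- action of A on pairs of multiples of tgen
lemma sl2Act_tgen_pair {r : ℕ} (hr : 1 ≤ r) (A : Matrix.SpecialLinearGroup (Fin 2) ℤ)
    (b d : ℤ) :
    sl2Act A (b • tgen r, d • tgen r) =
      ((A.1 0 0 * b + A.1 0 1 * d) • tgen r, (A.1 1 0 * b + A.1 1 1 * d) • tgen r) := by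
  simp only [sl2Act, smul_smul, ← add_smul]

lemma exists_sl2Act_base {r : ℕ} (hr : 1 ≤ r) (b d x y : ℤ)
    (h : (r:ℤ) ∣ x * b + y * d - 1) :
    ∃ A : Matrix.SpecialLinearGroup (Fin 2) ℤ,
      sl2Act A ((1:ℤ) • tgen r, (0:ℤ) • tgen r) = (b • tgen r, d • tgen r) := by
  obtain ⟨A, hA1, hA2⟩ := exists_SL2_column b d x y h
  refine ⟨A, ?_⟩
  rw [sl2Act_tgen_pair hr]
  refine Prod.ext ?_ ?_ <;> simp only [mul_one, mul_zero, add_zero]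
  · exact (zsmul_tgen_eq_iff hr _ _).2 hA1
  · exact (zsmul_tgen_eq_iff hr _ _).2 hA2

instance : MeasurableSingletonClass Torus2 :=
  ⟨fun v => by
    have : ({v} : Set Torus2) = {v.1} ×ˢ {v.2} := by ext w; simp [Prod.ext_iff, eq_comm]
    rw [this]
    exact (measurableSet_singleton _).prod (measurableSet_singleton _)⟩

lemma meas_act (μ : Measure Torus2)
    (hinv : ∀ A : Matrix.SpecialLinearGroup (Fin 2) ℤ, MeasurePreserving (sl2Act A) μ μ)
    (A : Matrix.SpecialLinearGroup (Fin 2) ℤ) (v : Torus2) :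
    μ {sl2Act A v} = μ {v} := by
  have := (hinv A).measure_preimage
    (measurableSet_singleton (sl2Act A v)).nullMeasurableSet
  rw [sl2Act_preimage_singleton] at this
  exact this.symm

def shearS (n : ℤ) : Matrix.SpecialLinearGroup (Fin 2) ℤ :=
  ⟨!![1, 0; n, 1], by simp [Matrix.det_fin_two_of]⟩

def shearT (n : ℤ) : Matrix.SpecialLinearGroup (Fin 2) ℤ :=
  ⟨!![1, n; 0, 1], by simp [Matrix.det_fin_two_of]⟩

lemma sl2Act_shearT (n : ℤ) (v : Torus2) : sl2Act (shearT n) v = (v.1 + n • v.2, v.2) := by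
  simp [sl2Act, shearT]

lemma sl2Act_shearS (n : ℤ) (v : Torus2) : sl2Act (shearS n) v = (v.1, n • v.1 + v.2) := by
  simp [sl2Act, shearS]

lemma inj_orbit_contra (μ : Measure Torus2) [IsProbabilityMeasure μ] {c : ENNReal}
    (hc : c ≠ 0) (f : ℤ → Torus2) (hf : Function.Injective f)
    (h : ∀ n, μ {f n} = c) : False := by
  have hd : Pairwise (Function.onFun Disjoint fun n => ({f n} : Set Torus2)) := by
    intro a b hab
    simp only [Function.onFun, Set.disjoint_singleton]
    exact fun he => hab (hf he)
  have hU := measure_iUnion (μ := μ) hd (fun n => measurableSet_singleton (f n))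
  simp only [h] at hU
  rw [ENNReal.tsum_const_eq_top_of_ne_zero hc] at hU
  exact measure_ne_top μ _ hU

lemma atom_torsion (μ : Measure Torus2) [IsProbabilityMeasure μ]
    (hinv : ∀ A : Matrix.SpecialLinearGroup (Fin 2) ℤ, MeasurePreserving (sl2Act A) μ μ)
    (v : Torus2) (hv : μ {v} ≠ 0) :
    IsOfFinAddOrder v.1 ∧ IsOfFinAddOrder v.2 := by
  constructor
  · by_contra hord
    refine inj_orbit_contra μ hv (fun n => (v.1, n • v.1 + v.2)) ?_ ?_
    · intro a b hab
      rw [Prod.mk.injEq] at hab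
      have h0 : (a - b) • v.1 = 0 := by
        rw [sub_smul, sub_eq_zero]
        exact add_right_cancel hab.2
      rw [← addOrderOf_dvd_iff_zsmul_eq_zero, addOrderOf_eq_zero hord] at h0
      have := zero_dvd_iff.1 (by exact_mod_cast h0)
      omega
    · intro n
      simpa [sl2Act_shearS] using meas_act μ hinv (shearS n) v
  · by_contra hord
    refine inj_orbit_contra μ hv (fun n => (v.1 + n • v.2, v.2)) ?_ ?_
    · intro a b hab
      rw [Prod.mk.injEq] at hab
      have h0 : (a - b) • v.2 = 0 := by
        rw [sub_smul, sub_eq_zero]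
        exact add_left_cancel hab.1
      rw [← addOrderOf_dvd_iff_zsmul_eq_zero, addOrderOf_eq_zero hord] at h0
      have := zero_dvd_iff.1 (by exact_mod_cast h0)
      omega
    · intro n
      simpa [sl2Act_shearT] using meas_act μ hinv (shearT n) v

lemma closure_pair_le (A : Matrix.SpecialLinearGroup (Fin 2) ℤ) (v : Torus2) :
    AddSubgroup.closure {(sl2Act A v).1, (sl2Act A v).2} ≤ AddSubgroup.closure {v.1, v.2} := by
  rw [AddSubgroup.closure_le]
  rintro z hz
  rcases Set.mem_insert_iff.1 hz with rfl | hz'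
  · exact AddSubgroup.mem_closure_pair.2 ⟨A.1 0 0, A.1 0 1, rfl⟩
  · rw [Set.mem_singleton_iff] at hz'
    subst hz'
    exact AddSubgroup.mem_closure_pair.2 ⟨A.1 1 0, A.1 1 1, rfl⟩

lemma closure_sl2Act (A : Matrix.SpecialLinearGroup (Fin 2) ℤ) (v : Torus2) :
    AddSubgroup.closure {(sl2Act A v).1, (sl2Act A v).2} = AddSubgroup.closure {v.1, v.2} := by
  refine le_antisymm (closure_pair_le A v) ?_
  have := closure_pair_le A⁻¹ (sl2Act A v)
  rwa [sl2Act_inv_self] at this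

lemma genSet_invariant (r : ℕ) (A : Matrix.SpecialLinearGroup (Fin 2) ℤ) :
    sl2Act A ⁻¹' genSet r = genSet r := by
  ext z
  simp only [Set.mem_preimage, genSet, Set.mem_setOf_eq]
  rw [closure_sl2Act]

lemma genSet_coords {r : ℕ} (hr : 1 ≤ r) {v : Torus2} (hv : v ∈ genSet r) :
    ∃ b d : ℤ, v = (b • tgen r, d • tgen r) ∧ ∃ x y : ℤ, (r:ℤ) ∣ x * b + y * d - 1 := by
  have hv' : AddSubgroup.closure {v.1, v.2} = torsSub r := hv
  have h1 : v.1 ∈ torsSub r := by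
    rw [← hv']; exact AddSubgroup.subset_closure (Set.mem_insert _ _)
  have h2 : v.2 ∈ torsSub r := by
    rw [← hv']; exact AddSubgroup.subset_closure (Set.mem_insert_of_mem _ rfl)
  rw [torsSub_eq_zmultiples hr] at h1 h2
  obtain ⟨b, hb⟩ := AddSubgroup.mem_zmultiples_iff.1 h1
  obtain ⟨d, hd⟩ := AddSubgroup.mem_zmultiples_iff.1 h2
  refine ⟨b, d, Prod.ext hb.symm hd.symm, ?_⟩
  rw [← closure_pair_tgen_iff hr b d]
  rw [hb, hd]
  exact hv'

lemma exists_act_eq {r : ℕ} (hr : 1 ≤ r) {v w : Torus2}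
    (hv : v ∈ genSet r) (hw : w ∈ genSet r) :
    ∃ A : Matrix.SpecialLinearGroup (Fin 2) ℤ, sl2Act A v = w := by
  obtain ⟨b, d, hvbd, x, y, hxy⟩ := genSet_coords hr hv
  obtain ⟨b', d', hwbd, x', y', hxy'⟩ := genSet_coords hr hw
  obtain ⟨A1, hA1⟩ := exists_sl2Act_base hr b d x y hxy
  obtain ⟨A2, hA2⟩ := exists_sl2Act_base hr b' d' x' y' hxy'
  refine ⟨A2 * A1⁻¹, ?_⟩
  rw [sl2Act_mul, hvbd, ← hA1, sl2Act_inv_self, hA2, hwbd]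

lemma exists_genSet_mem (v : Torus2) (h1 : IsOfFinAddOrder v.1) (h2 : IsOfFinAddOrder v.2) :
    ∃ r : ℕ, 1 ≤ r ∧ v ∈ genSet r := by
  have hnpos : 0 < addOrderOf v.1 := addOrderOf_pos_iff.2 h1
  have hmpos : 0 < addOrderOf v.2 := addOrderOf_pos_iff.2 h2
  set r0 := addOrderOf v.1 * addOrderOf v.2 with hr0
  have hr0pos : 0 < r0 := Nat.mul_pos hnpos hmpos
  have hv1 : v.1 ∈ torsSub r0 := by
    rw [mem_torsSub, natCast_zsmul, hr0, mul_nsmul, addOrderOf_nsmul_eq_zero, smul_zero]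
  have hv2 : v.2 ∈ torsSub r0 := by
    rw [mem_torsSub, natCast_zsmul, hr0, mul_comm, mul_nsmul, addOrderOf_nsmul_eq_zero, smul_zero]
  rw [torsSub_eq_zmultiples hr0pos] at hv1 hv2
  obtain ⟨b, hb⟩ := AddSubgroup.mem_zmultiples_iff.1 hv1
  obtain ⟨d, hd⟩ := AddSubgroup.mem_zmultiples_iff.1 hv2
  set g : ℕ := Nat.gcd (Int.gcd b d) r0 with hg
  have hgdvd : g ∣ r0 := Nat.gcd_dvd_right _ _
  have hgpos : 0 < g := Nat.gcd_pos_of_pos_right _ hr0pos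
  set r := r0 / g with hrdef
  have hr : 1 ≤ r := Nat.div_pos (Nat.le_of_dvd hr0pos hgdvd) hgpos
  have hrg : r * g = r0 := Nat.div_mul_cancel hgdvd
  have htg : (g : ℕ) • tgen r0 = tgen r := by
    rw [tgen, tgen, ← AddCircle.coe_nsmul]
    congr 1
    have h1' : ((r0:ℝ)) ≠ 0 := Nat.cast_ne_zero.2 hr0pos.ne'
    have h2' : ((r:ℝ)) ≠ 0 := Nat.cast_ne_zero.2 (by omega)
    have hcast : ((r:ℝ)) * g = r0 := by exact_mod_cast congrArg (Nat.cast : ℕ → ℝ) hrg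
    rw [nsmul_eq_mul]
    field_simp
    linarith [hcast]
  have hgb : (g:ℤ) ∣ b :=
    (Int.natCast_dvd_natCast.2 (Nat.gcd_dvd_left _ _)).trans (Int.gcd_dvd_left _ _)
  have hgd : (g:ℤ) ∣ d :=
    (Int.natCast_dvd_natCast.2 (Nat.gcd_dvd_left _ _)).trans (Int.gcd_dvd_right _ _)
  obtain ⟨b1, hb1⟩ := hgb
  obtain ⟨d1, hd1⟩ := hgd
  have hv1' : v.1 = b1 • tgen r := by
    rw [← hb, hb1, mul_comm, mul_smul, ← htg, natCast_zsmul]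
  have hv2' : v.2 = d1 • tgen r := by
    rw [← hd, hd1, mul_comm, mul_smul, ← htg, natCast_zsmul]
  have hG : Int.gcd b d = g * Int.gcd b1 d1 := by
    rw [hb1, hd1, Int.gcd_mul_left]
    simp
  have hcop : Nat.gcd (Int.gcd b1 d1) r = 1 := by
    have hkey : g = g * Nat.gcd (Int.gcd b1 d1) r := by
      conv_lhs => rw [hg, hG, ← hrg, mul_comm r g, Nat.gcd_mul_left]
    have h' : g * 1 = g * Nat.gcd (Int.gcd b1 d1) r := by rw [mul_one]; exact hkey
    exact (Nat.eq_of_mul_eq_mul_left hgpos h').symm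
  -- Bezout
  have hbez1 : ((Nat.gcd (Int.gcd b1 d1) r : ℕ) : ℤ) =
      (Int.gcd b1 d1 : ℤ) * Nat.gcdA (Int.gcd b1 d1) r + (r:ℤ) * Nat.gcdB (Int.gcd b1 d1) r :=
    Nat.gcd_eq_gcd_ab _ _
  have hbez2 : (Int.gcd b1 d1 : ℤ) = b1 * Int.gcdA b1 d1 + d1 * Int.gcdB b1 d1 :=
    Int.gcd_eq_gcd_ab b1 d1
  rw [hcop] at hbez1
  refine ⟨r, hr, ?_⟩
  show AddSubgroup.closure {v.1, v.2} = torsSub r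
  rw [hv1', hv2', closure_pair_tgen_iff hr]
  refine ⟨Int.gcdA b1 d1 * Nat.gcdA (Int.gcd b1 d1) r,
    Int.gcdB b1 d1 * Nat.gcdB (Int.gcd b1 d1) r * 0 + Int.gcdB b1 d1 * Nat.gcdA (Int.gcd b1 d1) r,
    ⟨-(Nat.gcdB (Int.gcd b1 d1) r), ?_⟩⟩
  push_cast at hbez1 ⊢
  linear_combination -hbez1 - Nat.gcdA (Int.gcd b1 d1) r * hbez2

/-- Any atomic `SL(2, ℤ)`-invariant ergodic Borel probability
measure on `(ℝ/ℤ)²` is, for some `r ≥ 1`, the uniform measure on the (finite)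
set of pairs `(x, y) ∈ (ℤ[1/r]/ℤ)²` generating `ℤ[1/r]/ℤ`; in particular every
point of positive measure has both coordinates rational (torsion). -/
theorem atomic_ergodic_classification (μ : Measure Torus2) [IsProbabilityMeasure μ]
    (hinv : ∀ A : Matrix.SpecialLinearGroup (Fin 2) ℤ,
      MeasurePreserving (sl2Act A) μ μ)
    (herg : ∀ s : Set Torus2, MeasurableSet s →
      (∀ A : Matrix.SpecialLinearGroup (Fin 2) ℤ, sl2Act A ⁻¹' s = s) →
      μ s = 0 ∨ μ s = 1)
    (hatom : ∃ v : Torus2, μ {v} ≠ 0) :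
    ∃ r : ℕ, 1 ≤ r ∧ (genSet r).Finite ∧ μ (genSet r) = 1 ∧
      (∀ v ∈ genSet r, μ {v} = ((genSet r).ncard : ENNReal)⁻¹) ∧
      ∀ v : Torus2, μ {v} ≠ 0 → IsOfFinAddOrder v.1 ∧ IsOfFinAddOrder v.2 := by
  classical
  obtain ⟨v, hv⟩ := hatom
  have htors := atom_torsion μ hinv v hv
  obtain ⟨r, hr, hvmem⟩ := exists_genSet_mem v htors.1 htors.2
  have htgenfin : IsOfFinAddOrder (tgen r) :=
    addOrderOf_pos_iff.1 (by rw [addOrderOf_tgen hr]; omega)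
  have hfin : (genSet r).Finite := by
    apply Set.Finite.subset (Set.Finite.prod htgenfin.finite_zmultiples htgenfin.finite_zmultiples)
    intro w hw
    obtain ⟨b, d, hwbd, -⟩ := genSet_coords hr hw
    rw [hwbd]
    exact ⟨AddSubgroup.zsmul_mem _ (AddSubgroup.mem_zmultiples _) b,
      AddSubgroup.zsmul_mem _ (AddSubgroup.mem_zmultiples _) d⟩
  have hmeas : MeasurableSet (genSet r) := hfin.measurableSet
  have h1 : μ (genSet r) = 1 := by
    rcases herg _ hmeas (genSet_invariant r) with h0 | h1
    · exact absurd (le_antisymm (h0 ▸ measure_mono (Set.singleton_subset_iff.2 hvmem))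
        zero_le) hv
    · exact h1
  have horb : ∀ w ∈ genSet r, μ {w} = μ {v} := by
    intro w hw
    obtain ⟨A, hA⟩ := exists_act_eq hr hvmem hw
    rw [← hA]
    exact meas_act μ hinv A v
  set s := hfin.toFinset with hs
  have hcover : genSet r = ⋃ x ∈ s, ({x} : Set Torus2) := by
    ext w
    simp only [Set.mem_iUnion, Set.mem_singleton_iff, exists_prop]
    constructor
    · intro hw; exact ⟨w, hfin.mem_toFinset.2 hw, rfl⟩
    · rintro ⟨x, hx, rfl⟩; exact hfin.mem_toFinset.1 hx
  have hsum : μ (genSet r) = ∑ x ∈ s, μ {x} := by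
    rw [hcover]
    exact measure_biUnion_finset
      (fun a _ b _ hab => Set.disjoint_singleton.2 hab)
      (fun x _ => measurableSet_singleton x)
  have hsum2 : (∑ x ∈ s, μ {x}) = s.card • μ {v} := by
    rw [Finset.sum_congr rfl (fun x hx => horb x (hfin.mem_toFinset.1 hx)), Finset.sum_const]
  have hkey : μ {v} * (s.card : ENNReal) = 1 := by
    rw [mul_comm, ← nsmul_eq_mul, ← hsum2, ← hsum, h1]
  have hμv : μ {v} = ((genSet r).ncard : ENNReal)⁻¹ := by
    rw [Set.ncard_eq_toFinset_card (genSet r) hfin]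
    exact ENNReal.eq_inv_of_mul_eq_one_left hkey
  refine ⟨r, hr, hfin, h1, fun w hw => by rw [horb w hw, hμv],
    fun w hw => atom_torsion μ hinv w hw⟩
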